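/- Let α_1,…,α_θ ∈ ℂ^θ be linearly independent for the standard symmetric bilinear form, let (a_{i,j}) be a matrix of complex numbers with a_{i,i} = 2, and fix k. Assume for every i ≠ k that either 2 α_i·α_k = a_{k,i} (α_k·α_k) or (1 − a_{k,i})(α_k·α_k) = 2, and assume α_k·α_k ≠ 0. Let (x_j) solve (1/2) α_i·α_i − Σ_j x_j α_j·α_i = 1 for all i, and set y = 1 − 2/(α_k·α_k) − Σ_j x_j a_{k,j}. Then x̃_j := x_j + δ_{j,k} y solves the reflected system (1/2) g̃_{ii} − Σ_j x̃_j g̃_{ji} = 1 for all i, where g̃_{ij} := α_i·α_j − a_{k,j} α_i·α_k − a_{k,i} α_k·α_j + a_{k,i}a_{k,j} α_k·α_k. -/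

import Mathlib

noncomputable def dotn {θ : ℕ} (x y : Fin θ → ℂ) : ℂ := ∑ i, x i * y i

lemma dotn_comm {θ : ℕ} (x y : Fin θ → ℂ) : dotn x y = dotn y x := by
  simp [dotn, mul_comm]

theorem reflected_system_solution {θ : ℕ} (α : Fin θ → Fin θ → ℂ)
    (a : Fin θ → Fin θ → ℂ) (k : Fin θ) (ha : ∀ i, a i i = 2)
    (hlin : LinearIndependent ℂ α)
    (hcart : ∀ i, i ≠ k →
      2 * dotn (α i) (α k) = a k i * dotn (α k) (α k) ∨
      (1 - a k i) * dotn (α k) (α k) = 2)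
    (hk0 : dotn (α k) (α k) ≠ 0)
    (x : Fin θ → ℂ)
    (hx : ∀ i, (1/2 : ℂ) * dotn (α i) (α i) - ∑ j, x j * dotn (α j) (α i) = 1)
    (y : ℂ) (hy : y = 1 - 2 / dotn (α k) (α k) - ∑ j, x j * a k j)
    (g : Fin θ → Fin θ → ℂ)
    (hg : ∀ i j, g i j = dotn (α i) (α j) - a k j * dotn (α i) (α k)
      - a k i * dotn (α k) (α j) + a k i * a k j * dotn (α k) (α k)) :
    ∀ i, (1/2 : ℂ) * g i i - ∑ j, (x j + if j = k then y else 0) * g j i = 1 := by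
  intro i
  have hsplit : ∑ j, (x j + if j = k then y else 0) * g j i
      = (∑ j, x j * g j i) + y * g k i := by
    simp only [add_mul, ite_mul, zero_mul, Finset.sum_add_distrib]
    rw [Finset.sum_ite_eq' Finset.univ k (fun j => y * g j i)]
    simp
  have hsum : ∑ j, x j * g j i
      = (∑ j, x j * dotn (α j) (α i)) - a k i * (∑ j, x j * dotn (α j) (α k))
        - dotn (α k) (α i) * (∑ j, x j * a k j)
        + a k i * dotn (α k) (α k) * (∑ j, x j * a k j) := by
    rw [Finset.mul_sum, Finset.mul_sum, Finset.mul_sum, ← Finset.sum_sub_distrib,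
      ← Finset.sum_sub_distrib, ← Finset.sum_add_distrib]
    apply Finset.sum_congr rfl
    intro j _
    rw [hg]; ring
  have h1 := hx i
  have h2 := hx k
  have hD : ∑ j, x j * dotn (α j) (α i) = (1/2 : ℂ) * dotn (α i) (α i) - 1 := by
    linear_combination -h1
  have hE : ∑ j, x j * dotn (α j) (α k) = (1/2 : ℂ) * dotn (α k) (α k) - 1 := by
    linear_combination -h2
  have hcomm : dotn (α i) (α k) = dotn (α k) (α i) := dotn_comm _ _
  rw [hsplit, hsum, hD, hE, hg i i, hg k i, ha k, hy, hcomm]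
  by_cases hik : i = k
  · subst hik
    rw [ha i]
    field_simp
    ring
  · rcases hcart i hik with h | h
    · rw [hcomm] at h
      field_simp
      linear_combination (dotn (α k) (α k) - 2 - a k i * dotn (α k) (α k)) * h
    · field_simp
      linear_combination (2 * dotn (α k) (α i) - a k i * dotn (α k) (α k)) * h
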